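/- Let $P$ be an FDLTI plant, $\mathcal{S}$ a sparsity pattern, and $(i,j)$ an admissible index of $\mathcal{S}$. For any $D_K\in\mathcal{S}$ static and any scalar $V\in\mathbb{R}$, the controller $D_K^V := D_K + e_i V e_j^T$ also lies in $\mathcal{S}$, and $A_{CL}(e_j^T \mathcal{C}(P,D_K) e_i, V) = A_{CL}(P, D_K^V)$. Consequently, if $\lambda$ is a fixed mode of $P$ with respect to static controllers in $\mathcal{S}$, then $\lambda$ is a fixed mode of the SISO plant $e_j^T\mathcal{C}(P,D_K)e_i$ with respect to all static (scalar) controllers. -/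

import Mathlib

open Matrix

/-- Closed-loop dynamics matrix for a static controller `DK`. -/
noncomputable def AclS {n p q : Type*}
    [Fintype n] [DecidableEq n] [Fintype p] [DecidableEq p] [Fintype q] [DecidableEq q]
    (AP : Matrix n n ℂ) (BP : Matrix n p ℂ) (CP : Matrix q n ℂ) (DP : Matrix q p ℂ)
    (DK : Matrix p q ℂ) : Matrix n n ℂ :=
  AP + BP * (1 - DK * DP)⁻¹ * DK * CP

/-- Membership in a sparsity pattern determined by the admissible index set `Adm`. -/
def InS {p q : Type*} (Adm : Set (p × q)) (K : Matrix p q ℂ) : Prop :=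
  ∀ ij, ij ∉ Adm → K ij.1 ij.2 = 0

/- ----------------------- auxiliary lemmas ----------------------- -/

lemma sb_sandwich {m n p q : ℕ} (a : Fin m) (b : Fin n) (c : Fin p) (d : Fin q)
    (Y : Matrix (Fin n) (Fin p) ℂ) :
    Matrix.single a b (1:ℂ) * Y * Matrix.single c d (1:ℂ) = Matrix.single a d (Y b c) := by
  ext r s
  simp only [Matrix.mul_apply, Matrix.single, Matrix.of_apply, ite_mul, mul_ite,
    one_mul, mul_one, zero_mul, mul_zero, ← ite_and]
  simp [ite_and, Finset.sum_ite_eq, Finset.sum_ite_eq']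
  by_cases h1 : a = r <;> by_cases h2 : d = s <;> simp [h1, h2]

lemma sb_smul {m n : ℕ} (a : Fin m) (b : Fin n) (v : ℂ) :
    Matrix.single a b v = v • Matrix.single a b (1:ℂ) := by
  rw [smul_single, smul_eq_mul, mul_one]

lemma sb00 (c : ℂ) : Matrix.single (0 : Fin 1) (0 : Fin 1) c = c • 1 := by
  ext r s
  fin_cases r <;> fin_cases s <;> simp

lemma core_keyW {nu ny r : ℕ} (i : Fin nu) (j : Fin ny)
    (DP : Matrix (Fin ny) (Fin nu) ℂ) (B : Matrix (Fin nu) (Fin nu) ℂ)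
    (W : Matrix (Fin ny) (Fin r) ℂ) :
    Matrix.single i j (1:ℂ) * (DP * (B * (Matrix.single i j (1:ℂ) * W))) =
      ((DP * B) j i) • (Matrix.single i j (1:ℂ) * W) := by
  calc Matrix.single i j (1:ℂ) * (DP * (B * (Matrix.single i j (1:ℂ) * W)))
      = (Matrix.single i j (1:ℂ) * (DP * B) * Matrix.single i j (1:ℂ)) * W := by
        simp only [Matrix.mul_assoc]
    _ = Matrix.single i j ((DP * B) j i) * W := by rw [sb_sandwich]
    _ = ((DP * B) j i) • (Matrix.single i j (1:ℂ) * W) := by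
        rw [sb_smul]; exact Matrix.smul_mul _ _ _

lemma core_keyW' {nu ny : ℕ} (i : Fin nu) (j : Fin ny)
    (DP : Matrix (Fin ny) (Fin nu) ℂ) (B : Matrix (Fin nu) (Fin nu) ℂ) :
    Matrix.single i j (1:ℂ) * (DP * (B * Matrix.single i j (1:ℂ))) =
      ((DP * B) j i) • Matrix.single i j (1:ℂ) := by
  calc Matrix.single i j (1:ℂ) * (DP * (B * Matrix.single i j (1:ℂ)))
      = Matrix.single i j (1:ℂ) * (DP * B) * Matrix.single i j (1:ℂ) := by
        simp only [Matrix.mul_assoc]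
    _ = Matrix.single i j ((DP * B) j i) := by rw [sb_sandwich]
    _ = ((DP * B) j i) • Matrix.single i j (1:ℂ) := sb_smul _ _ _

lemma sb_fuse' {nu ny : ℕ} (i : Fin nu) (j : Fin ny) :
    Matrix.single i (0 : Fin 1) (1:ℂ) * Matrix.single (0 : Fin 1) j (1:ℂ) =
      Matrix.single i j (1:ℂ) := by
  have h := sb_sandwich i (0 : Fin 1) (0 : Fin 1) j (1 : Matrix (Fin 1) (Fin 1) ℂ)
  rw [Matrix.mul_one] at h
  rw [h, Matrix.one_apply_eq]

lemma sb_fuse {nu ny r : ℕ} (i : Fin nu) (j : Fin ny) (W : Matrix (Fin ny) (Fin r) ℂ) :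
    Matrix.single i (0 : Fin 1) (1:ℂ) * (Matrix.single (0 : Fin 1) j (1:ℂ) * W) =
      Matrix.single i j (1:ℂ) * W := by
  rw [← Matrix.mul_assoc, sb_fuse']

lemma coreXN {nu ny : ℕ} (i : Fin nu) (j : Fin ny)
    (DP : Matrix (Fin ny) (Fin nu) ℂ) (M B : Matrix (Fin nu) (Fin nu) ℂ) (V : ℂ)
    (hBl : B * M = 1) (hBr : M * B = 1) (ht : 1 - V * ((DP * B) j i) ≠ 0) :
    (B + (V / (1 - V * ((DP * B) j i))) • (B * (Matrix.single i j (1:ℂ) * (DP * B)))) *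
      (M - V • (Matrix.single i j (1:ℂ) * DP)) = 1 := by
  have hBl' : ∀ (r : ℕ) (W : Matrix (Fin nu) (Fin r) ℂ), B * (M * W) = W := fun r W => by
    rw [← Matrix.mul_assoc, hBl, Matrix.one_mul]
  have hBr' : ∀ (r : ℕ) (W : Matrix (Fin nu) (Fin r) ℂ), M * (B * W) = W := fun r W => by
    rw [← Matrix.mul_assoc, hBr, Matrix.one_mul]
  simp only [Matrix.add_mul, Matrix.mul_add, Matrix.sub_mul, Matrix.mul_sub,
    Matrix.smul_mul, Matrix.mul_smul, smul_smul,
    Matrix.mul_assoc, hBl, hBr, hBl', hBr', core_keyW, core_keyW',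
    Matrix.mul_one, Matrix.one_mul, mul_one, one_mul]
  match_scalars <;> field_simp <;> ring

lemma coreNX {nu ny : ℕ} (i : Fin nu) (j : Fin ny)
    (DP : Matrix (Fin ny) (Fin nu) ℂ) (M B : Matrix (Fin nu) (Fin nu) ℂ) (V : ℂ)
    (hBl : B * M = 1) (hBr : M * B = 1) (ht : 1 - V * ((DP * B) j i) ≠ 0) :
    (M - V • (Matrix.single i j (1:ℂ) * DP)) *
      (B + (V / (1 - V * ((DP * B) j i))) • (B * (Matrix.single i j (1:ℂ) * (DP * B)))) = 1 := by
  have hBl' : ∀ (r : ℕ) (W : Matrix (Fin nu) (Fin r) ℂ), B * (M * W) = W := fun r W => by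
    rw [← Matrix.mul_assoc, hBl, Matrix.one_mul]
  have hBr' : ∀ (r : ℕ) (W : Matrix (Fin nu) (Fin r) ℂ), M * (B * W) = W := fun r W => by
    rw [← Matrix.mul_assoc, hBr, Matrix.one_mul]
  simp only [Matrix.add_mul, Matrix.mul_add, Matrix.sub_mul, Matrix.mul_sub,
    Matrix.smul_mul, Matrix.mul_smul, smul_smul,
    Matrix.mul_assoc, hBl, hBr, hBl', hBr', core_keyW, core_keyW',
    Matrix.mul_one, Matrix.one_mul, mul_one, one_mul]
  match_scalars <;> field_simp <;> ring

/-- rewrite `1 - (DK + E_ij(V)) * DP` in the convenient form. -/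
lemma Nalt {nu ny : ℕ} (i : Fin nu) (j : Fin ny)
    (DK : Matrix (Fin nu) (Fin ny) ℂ) (DP : Matrix (Fin ny) (Fin nu) ℂ) (V : ℂ) :
    1 - (DK + Matrix.single i j V) * DP =
      (1 - DK * DP) - V • (Matrix.single i j (1:ℂ) * DP) := by
  rw [sb_smul, Matrix.add_mul, Matrix.smul_mul, sub_add_eq_sub_sub]

/-- `(1 - DP*DK)⁻¹ = 1 + DP * ((1 - DK*DP)⁻¹ * DK)`. -/
lemma inv_one_sub_comm {nu ny : ℕ}
    (DK : Matrix (Fin nu) (Fin ny) ℂ) (DP : Matrix (Fin ny) (Fin nu) ℂ)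
    (hM : IsUnit (1 - DK * DP)) :
    (1 - DP * DK)⁻¹ = 1 + DP * ((1 - DK * DP)⁻¹ * DK) := by
  have hMl := Matrix.nonsing_inv_mul _ ((Matrix.isUnit_iff_isUnit_det _).mp hM)
  apply Matrix.inv_eq_left_inv
  have e1 : (1 - DK * DP)⁻¹ * DK - (1 - DK * DP)⁻¹ * (DK * (DP * DK)) = DK := by
    have h2 : DK - DK * (DP * DK) = (1 - DK * DP) * DK := by
      rw [Matrix.sub_mul, Matrix.one_mul, Matrix.mul_assoc]
    rw [← Matrix.mul_sub, h2, ← Matrix.mul_assoc, hMl, Matrix.one_mul]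
  have e2 : DP * ((1 - DK * DP)⁻¹ * DK) - DP * ((1 - DK * DP)⁻¹ * (DK * (DP * DK))) =
      DP * DK := by
    rw [← Matrix.mul_sub, e1]
  calc (1 + DP * ((1 - DK * DP)⁻¹ * DK)) * (1 - DP * DK)
      = 1 - DP * DK + (DP * ((1 - DK * DP)⁻¹ * DK) -
          DP * ((1 - DK * DP)⁻¹ * (DK * (DP * DK)))) := by
        simp only [Matrix.add_mul, Matrix.mul_sub, Matrix.mul_one, Matrix.one_mul,
          Matrix.mul_assoc]
        abel
    _ = 1 - DP * DK + DP * DK := by rw [e2]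
    _ = 1 := by abel

/-- If the perturbed loop matrix is invertible then the scalar `1 - V s` is nonzero. -/
lemma t_ne_zero {nu ny : ℕ} (i : Fin nu) (j : Fin ny)
    (DK : Matrix (Fin nu) (Fin ny) ℂ) (DP : Matrix (Fin ny) (Fin nu) ℂ) (V : ℂ)
    (hM : IsUnit (1 - DK * DP))
    (hN : IsUnit (1 - (DK + Matrix.single i j V) * DP)) :
    1 - V * ((DP * (1 - DK * DP)⁻¹ : Matrix (Fin ny) (Fin nu) ℂ) j i) ≠ 0 := by
  intro h0
  have hdet := (Matrix.isUnit_iff_isUnit_det _).mp hM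
  have hBr := Matrix.mul_nonsing_inv _ hdet
  have hBr' : ∀ (r : ℕ) (W : Matrix (Fin nu) (Fin r) ℂ),
      (1 - DK * DP) * ((1 - DK * DP)⁻¹ * W) = W := fun r W => by
    rw [← Matrix.mul_assoc, hBr, Matrix.one_mul]
  have hNl := Matrix.nonsing_inv_mul _ ((Matrix.isUnit_iff_isUnit_det _).mp hN)
  have key : (1 - (DK + Matrix.single i j V) * DP) *
      ((1 - DK * DP)⁻¹ * Matrix.single i j (1:ℂ)) =
      (1 - V * ((DP * (1 - DK * DP)⁻¹ : Matrix (Fin ny) (Fin nu) ℂ) j i)) • Matrix.single i j (1:ℂ) := by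
    rw [Nalt]
    simp only [Matrix.sub_mul, Matrix.smul_mul, Matrix.mul_assoc, hBr', core_keyW',
      smul_smul]
    rw [sub_smul, one_smul]
  rw [h0, zero_smul] at key
  have hz : (1 - DK * DP)⁻¹ * Matrix.single i j (1:ℂ) = 0 := by
    have := congrArg (fun W => (1 - (DK + Matrix.single i j V) * DP)⁻¹ * W) key
    simpa [← Matrix.mul_assoc, hNl, Matrix.one_mul] using this
  have hE : Matrix.single i j (1:ℂ) = 0 := by
    have := hBr' ny (Matrix.single i j (1:ℂ))
    rw [hz, Matrix.mul_zero] at this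
    exact this.symm
  have : (1:ℂ) = 0 := by
    have := congrFun (congrFun hE i) j
    simpa using this
  exact one_ne_zero this

set_option maxHeartbeats 1000000 in
/-- The main closed-loop equality (second conjunct), as a standalone lemma. -/
lemma part2_eq {n nu ny : ℕ}
    (AP : Matrix (Fin n) (Fin n) ℂ) (BP : Matrix (Fin n) (Fin nu) ℂ)
    (CP : Matrix (Fin ny) (Fin n) ℂ) (DP : Matrix (Fin ny) (Fin nu) ℂ)
    (i : Fin nu) (j : Fin ny)
    (DK : Matrix (Fin nu) (Fin ny) ℂ) (V : ℂ)
    (hM : IsUnit (1 - DK * DP))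
    (hN : IsUnit (1 - (DK + Matrix.single i j V) * DP)) :
    AclS (AclS AP BP CP DP DK)
        (BP * (1 - DK * DP)⁻¹ * Matrix.single i (0 : Fin 1) (1 : ℂ))
        (Matrix.single (0 : Fin 1) j (1 : ℂ) * (1 - DP * DK)⁻¹ * CP)
        (Matrix.single (0 : Fin 1) j (1 : ℂ) * DP * (1 - DK * DP)⁻¹ *
          Matrix.single i (0 : Fin 1) (1 : ℂ))
        (V • (1 : Matrix (Fin 1) (Fin 1) ℂ)) =
      AclS AP BP CP DP (DK + Matrix.single i j V) := by
  set s : ℂ := (DP * (1 - DK * DP)⁻¹ : Matrix (Fin ny) (Fin nu) ℂ) j i with hs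
  have hdet := (Matrix.isUnit_iff_isUnit_det _).mp hM
  have hBl := Matrix.nonsing_inv_mul _ hdet
  have hBr := Matrix.mul_nonsing_inv _ hdet
  have ht : 1 - V * s ≠ 0 := t_ne_zero i j DK DP V hM hN
  have hNinv : (1 - (DK + Matrix.single i j V) * DP)⁻¹ =
      (1 - DK * DP)⁻¹ + (V / (1 - V * s)) •
        ((1 - DK * DP)⁻¹ * (Matrix.single i j (1:ℂ) * (DP * (1 - DK * DP)⁻¹))) := by
    rw [Nalt]
    exact Matrix.inv_eq_left_inv (coreXN i j DP _ _ V hBl hBr ht)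
  have hQ := inv_one_sub_comm DK DP hM
  have hD' : Matrix.single (0 : Fin 1) j (1:ℂ) * DP * (1 - DK * DP)⁻¹ *
      Matrix.single i (0 : Fin 1) (1:ℂ) = s • 1 := by
    rw [Matrix.mul_assoc (Matrix.single (0 : Fin 1) j (1:ℂ)) DP _, sb_sandwich, ← hs, sb00]
  have h1 : (V • (1 : Matrix (Fin 1) (Fin 1) ℂ)) * (s • (1 : Matrix (Fin 1) (Fin 1) ℂ)) =
      (V * s) • 1 := by
    rw [Matrix.smul_mul, Matrix.mul_smul, Matrix.one_mul, smul_smul]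
  have h2 : (1 : Matrix (Fin 1) (Fin 1) ℂ) - (V * s) • 1 = (1 - V * s) • 1 := by
    rw [sub_smul, one_smul]
  have hKinv : (1 - (V • (1 : Matrix (Fin 1) (Fin 1) ℂ)) * (s • 1))⁻¹ =
      (1 - V * s)⁻¹ • (1 : Matrix (Fin 1) (Fin 1) ℂ) := by
    rw [h1, h2]
    refine Matrix.inv_eq_left_inv ?_
    rw [Matrix.smul_mul, Matrix.mul_smul, Matrix.one_mul, smul_smul, inv_mul_cancel₀ ht,
      one_smul]
  unfold AclS
  rw [hD', hKinv, hQ, hNinv, sb_smul i j V]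
  simp only [Matrix.add_mul, Matrix.mul_add, Matrix.sub_mul, Matrix.mul_sub,
    Matrix.smul_mul, Matrix.mul_smul, smul_smul,
    Matrix.mul_assoc, sb_fuse, sb_fuse', core_keyW, core_keyW',
    Matrix.mul_one, Matrix.one_mul, mul_one, one_mul, ← hs, add_assoc]
  match_scalars <;> field_simp <;> ring

/-- Perturbing a static structured controller at an admissible index stays in the
pattern, equals the closed loop of the SISO subsystem `eⱼᵀ C(P, DK) eᵢ` with the
scalar gain `V`, and hence fixed modes of `P` w.r.t. static `S`-controllers are
fixed modes of that SISO subsystem w.r.t. all static scalar controllers. -/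
theorem stmt_7 {n nu ny : ℕ} (Adm : Set (Fin nu × Fin ny))
    (AP : Matrix (Fin n) (Fin n) ℂ) (BP : Matrix (Fin n) (Fin nu) ℂ)
    (CP : Matrix (Fin ny) (Fin n) ℂ) (DP : Matrix (Fin ny) (Fin nu) ℂ)
    (i : Fin nu) (j : Fin ny) (hij : (i, j) ∈ Adm)
    (DK : Matrix (Fin nu) (Fin ny) ℂ) (hDK : InS Adm DK) :
    (∀ V : ℂ, InS Adm (DK + Matrix.single i j V)) ∧
    (∀ V : ℂ,
      IsUnit (1 - DK * DP) →
      IsUnit (1 - (DK + Matrix.single i j V) * DP) →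
      AclS (AclS AP BP CP DP DK)
          (BP * (1 - DK * DP)⁻¹ * Matrix.single i (0 : Fin 1) (1 : ℂ))
          (Matrix.single (0 : Fin 1) j (1 : ℂ) * (1 - DP * DK)⁻¹ * CP)
          (Matrix.single (0 : Fin 1) j (1 : ℂ) * DP * (1 - DK * DP)⁻¹ *
            Matrix.single i (0 : Fin 1) (1 : ℂ))
          (V • (1 : Matrix (Fin 1) (Fin 1) ℂ)) =
        AclS AP BP CP DP (DK + Matrix.single i j V)) ∧
    (∀ lam : ℂ,
      (∀ DK' : Matrix (Fin nu) (Fin ny) ℂ, InS Adm DK' → IsUnit (1 - DK' * DP) →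
        lam ∈ spectrum ℂ (AclS AP BP CP DP DK')) →
      IsUnit (1 - DK * DP) →
      ∀ V : ℂ,
        IsUnit (1 - V • (1 : Matrix (Fin 1) (Fin 1) ℂ) *
          (Matrix.single (0 : Fin 1) j (1 : ℂ) * DP * (1 - DK * DP)⁻¹ *
            Matrix.single i (0 : Fin 1) (1 : ℂ))) →
        lam ∈ spectrum ℂ (AclS (AclS AP BP CP DP DK)
          (BP * (1 - DK * DP)⁻¹ * Matrix.single i (0 : Fin 1) (1 : ℂ))
          (Matrix.single (0 : Fin 1) j (1 : ℂ) * (1 - DP * DK)⁻¹ * CP)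
          (Matrix.single (0 : Fin 1) j (1 : ℂ) * DP * (1 - DK * DP)⁻¹ *
            Matrix.single i (0 : Fin 1) (1 : ℂ))
          (V • (1 : Matrix (Fin 1) (Fin 1) ℂ)))) := by
  have part1 : ∀ V : ℂ, InS Adm (DK + Matrix.single i j V) := by
    intro V ij hmem
    have hne : ¬(i = ij.1 ∧ j = ij.2) := by
      rintro ⟨rfl, rfl⟩
      exact hmem hij
    simp [Matrix.add_apply, hDK ij hmem, Matrix.single_apply_of_ne i j V ij.1 ij.2 hne]
  refine ⟨part1, fun V hM hN => part2_eq AP BP CP DP i j DK V hM hN, ?_⟩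
  intro lam hyp hM V hV
  set s : ℂ := (DP * (1 - DK * DP)⁻¹ : Matrix (Fin ny) (Fin nu) ℂ) j i with hs
  have hdet := (Matrix.isUnit_iff_isUnit_det _).mp hM
  have hBl := Matrix.nonsing_inv_mul _ hdet
  have hBr := Matrix.mul_nonsing_inv _ hdet
  have hD' : Matrix.single (0 : Fin 1) j (1:ℂ) * DP * (1 - DK * DP)⁻¹ *
      Matrix.single i (0 : Fin 1) (1:ℂ) = s • 1 := by
    rw [Matrix.mul_assoc (Matrix.single (0 : Fin 1) j (1:ℂ)) DP _, sb_sandwich, ← hs, sb00]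
  rw [hD'] at hV
  have h1 : (V • (1 : Matrix (Fin 1) (Fin 1) ℂ)) * (s • (1 : Matrix (Fin 1) (Fin 1) ℂ)) =
      (V * s) • 1 := by
    rw [Matrix.smul_mul, Matrix.mul_smul, Matrix.one_mul, smul_smul]
  have h2 : (1 : Matrix (Fin 1) (Fin 1) ℂ) - (V * s) • 1 = (1 - V * s) • 1 := by
    rw [sub_smul, one_smul]
  rw [h1, h2] at hV
  have ht : 1 - V * s ≠ 0 := by
    have hdv := (Matrix.isUnit_iff_isUnit_det _).mp hV
    have : ((1 - V * s) • (1 : Matrix (Fin 1) (Fin 1) ℂ)).det = 1 - V * s := by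
      rw [Matrix.det_fin_one]
      simp
    rw [this] at hdv
    exact hdv.ne_zero
  have hN : IsUnit (1 - (DK + Matrix.single i j V) * DP) := by
    rw [Nalt]
    exact (Matrix.isUnit_iff_isUnit_det _).mpr (Matrix.isUnit_det_of_left_inverse (coreXN i j DP _ _ V hBl hBr ht))
  rw [part2_eq AP BP CP DP i j DK V hM hN]
  exact hyp _ (part1 V) hN
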